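/- Let Δ and Δ' be bases of Φ and Y ⊆ Δ admissible. Then F_Y^Δ ∩ C̃(Δ') ≠ ∅ if and only if there exists an admissible subset Y' ⊆ Δ' with F_Y^Δ = F_{Y'}^{Δ'}. -/

import Mathlib

/-!
Common setup for Werner, "Compactifications of Bruhat-Tits buildings associated to
linear representations":  a finite-dimensional real vector space `A` (the apartment),
a root system `Φ` in the dual space together with a Weyl-group invariant inner
product, a finite Weyl-invariant set `Λ` of (K-)weights, and for every basis `Δ`
of `Φ` a highest weight `lam0 Δ ∈ Λ`.
-/

open Pointwise Filter Topology Bornology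
open scoped Classical

noncomputable section

/-- A set `M` of linear forms is *connected* if the graph with vertex set `M` and an
edge between `m` and `n` iff `inn m n ≠ 0` is connected. -/
def GraphConnected {D : Type*} (inn : D → D → ℝ) (M : Set D) : Prop :=
  ∀ m ∈ M, ∀ n ∈ M,
    Relation.ReflTransGen (fun x y => x ∈ M ∧ y ∈ M ∧ inn x y ≠ 0) m n

/-- The coefficients of `μ` as a linear combination of the elements of `Δ` (chosen
arbitrarily if one exists; it is unique when `Δ` is linearly independent). -/
noncomputable def coeffs {A : Type*} [AddCommGroup A] [Module ℝ A]
    (Δ : Finset (Module.Dual ℝ A)) (μ : Module.Dual ℝ A) : Module.Dual ℝ A → ℝ :=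
  if h : ∃ n : Module.Dual ℝ A → ℝ, μ = ∑ b ∈ Δ, n b • b then h.choose else fun _ => 0

/-- The support `[μ]` of `μ` with respect to the basis `Δ`: the set of elements of `Δ`
whose coefficient in `μ` is nonzero. -/
noncomputable def supp {A : Type*} [AddCommGroup A] [Module ℝ A]
    (Δ : Finset (Module.Dual ℝ A)) (μ : Module.Dual ℝ A) : Finset (Module.Dual ℝ A) :=
  Δ.filter fun a => coeffs Δ μ a ≠ 0

/-- Raw data: a finite set `Φ` of roots in the dual of `A`, a product `inn` on the dual,
a finite set `Λ` of weights, and a highest weight `lam0 Δ` for every basis `Δ`. -/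
structure RootWeightData (A : Type*) [NormedAddCommGroup A] [NormedSpace ℝ A]
    [FiniteDimensional ℝ A] where
  Φ : Finset (Module.Dual ℝ A)
  inn : Module.Dual ℝ A → Module.Dual ℝ A → ℝ
  Λ : Finset (Module.Dual ℝ A)
  lam0 : Finset (Module.Dual ℝ A) → Module.Dual ℝ A

namespace RootWeightData

variable {A : Type*} [NormedAddCommGroup A] [NormedSpace ℝ A] [FiniteDimensional ℝ A]
variable (S : RootWeightData A)

/-- The reflection associated to the root `a`. -/
def refl (a : Module.Dual ℝ A) : Function.End (Module.Dual ℝ A) :=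
  fun x => x - (2 * S.inn x a / S.inn a a) • a

/-- The Weyl group `W`, generated by the reflections in the roots. -/
def weyl : Submonoid (Function.End (Module.Dual ℝ A)) :=
  Submonoid.closure {f | ∃ a ∈ S.Φ, f = S.refl a}

/-- `Δ` is a basis of the root system `Φ`: a linearly independent subset of `Φ` such
that every root is a nonnegative or nonpositive linear combination of `Δ`. -/
def IsBase (Δ : Finset (Module.Dual ℝ A)) : Prop :=
  (↑Δ : Set (Module.Dual ℝ A)) ⊆ (S.Φ : Set (Module.Dual ℝ A)) ∧
  LinearIndependent ℝ (fun a : (Δ : Set (Module.Dual ℝ A)) => (a : Module.Dual ℝ A)) ∧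
  ∀ a ∈ S.Φ,
    (∃ n : Module.Dual ℝ A → ℝ, (∀ b ∈ Δ, 0 ≤ n b) ∧ a = ∑ b ∈ Δ, n b • b) ∨
    (∃ n : Module.Dual ℝ A → ℝ, (∀ b ∈ Δ, 0 ≤ n b) ∧ a = -∑ b ∈ Δ, n b • b)

/-- `Y` is an admissible subset of the basis `Δ`: `Y ⊆ Δ` and `Y ∪ {λ₀(Δ)}` is
connected. -/
def Admissible (Δ Y : Finset (Module.Dual ℝ A)) : Prop :=
  Y ⊆ Δ ∧ GraphConnected S.inn ((↑Y : Set (Module.Dual ℝ A)) ∪ {S.lam0 Δ})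

end RootWeightData

/-- The whole setting of Werner's paper: the data of `RootWeightData`, where `Φ` is a
(crystallographic, possibly non-reduced) root system spanning the dual of `A`, `inn` is
a Weyl-invariant inner product, `Λ` is a finite Weyl-invariant set of weights, and
`lam0` picks, Weyl-equivariantly, a highest weight for each basis, dominating all of
`Λ`; moreover a subset of a basis is admissible iff it is the support of
`λ₀(Δ) - λ` for some weight `λ`. -/
structure RootWeightSystem (A : Type*) [NormedAddCommGroup A] [NormedSpace ℝ A]
    [FiniteDimensional ℝ A] extends RootWeightData A where
  inn_symm : ∀ x y, inn x y = inn y x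
  inn_add_left : ∀ x y z, inn (x + y) z = inn x z + inn y z
  inn_smul_left : ∀ (c : ℝ) (x y), inn (c • x) y = c * inn x y
  inn_pos : ∀ x, x ≠ 0 → 0 < inn x x
  root_ne_zero : ∀ a ∈ Φ, a ≠ (0 : Module.Dual ℝ A)
  neg_mem : ∀ a ∈ Φ, -a ∈ Φ
  refl_mem : ∀ a ∈ Φ, ∀ b ∈ Φ, toRootWeightData.refl a b ∈ Φ
  inn_weyl_invariant :
    ∀ w ∈ toRootWeightData.weyl, ∀ x y, inn (w x) (w y) = inn x y
  phi_spans : Submodule.span ℝ (Φ : Set (Module.Dual ℝ A)) = ⊤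
  exists_base : ∃ Δ, toRootWeightData.IsBase Δ
  base_cover : ∀ x : A, ∃ Δ, toRootWeightData.IsBase Δ ∧ ∀ a ∈ Δ, 0 ≤ a x
  base_weyl : ∀ w ∈ toRootWeightData.weyl, ∀ Δ, toRootWeightData.IsBase Δ →
    toRootWeightData.IsBase (Δ.image (w : Module.Dual ℝ A → Module.Dual ℝ A))
  lam0_mem : ∀ Δ, toRootWeightData.IsBase Δ → lam0 Δ ∈ Λ
  lam0_dominates : ∀ Δ, toRootWeightData.IsBase Δ → ∀ l ∈ Λ,
    ∃ n : Module.Dual ℝ A → ℝ, (∀ a ∈ Δ, 0 ≤ n a) ∧ lam0 Δ - l = ∑ a ∈ Δ, n a • a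
  weight_weyl_invariant : ∀ w ∈ toRootWeightData.weyl, ∀ l ∈ Λ, w l ∈ Λ
  lam0_equivariant : ∀ w ∈ toRootWeightData.weyl, ∀ Δ, toRootWeightData.IsBase Δ →
    lam0 (Δ.image (w : Module.Dual ℝ A → Module.Dual ℝ A)) = w (lam0 Δ)
  integrality : ∀ l ∈ Λ, ∀ a ∈ Φ, ∃ k : ℤ, 2 * inn l a / inn a a = (k : ℝ)
  admissible_iff_support : ∀ Δ, toRootWeightData.IsBase Δ → ∀ Y ⊆ Δ,
    (toRootWeightData.Admissible Δ Y ↔ ∃ l ∈ Λ, supp Δ (lam0 Δ - l) = Y)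

namespace RootWeightSystem

variable {A : Type*} [NormedAddCommGroup A] [NormedSpace ℝ A] [FiniteDimensional ℝ A]
variable (S : RootWeightSystem A)

/-- The face `F_Y^Δ` of the apartment `A` associated to a basis `Δ` and an admissible
subset `Y ⊆ Δ`. -/
def Face (Δ Y : Finset (Module.Dual ℝ A)) : Set A :=
  {x | (∀ a ∈ Y, a x = 0) ∧
    ∀ l ∈ S.Λ, ¬ supp Δ (S.lam0 Δ - l) ⊆ Y → 0 < (S.lam0 Δ - l) x}

/-- `F` belongs to the collection `Σ` of faces. -/
def IsFace (F : Set A) : Prop :=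
  ∃ Δ Y, S.toRootWeightData.IsBase Δ ∧ S.toRootWeightData.Admissible Δ Y ∧
    F = S.Face Δ Y

/-- The collection `Σ` of all faces. -/
def Faces : Type _ := {F : Set A // S.IsFace F}

/-- The relation identifying `(F, u)` and `(F, v)` when `u - v ∈ ⟨F⟩`; the quotient is
the disjoint union `Ā = ⊔_{F ∈ Σ} A/⟨F⟩`. -/
def AbarRel (p q : S.Faces × A) : Prop :=
  p.1 = q.1 ∧ p.2 - q.2 ∈ Submodule.span ℝ p.1.val

/-- The compactified apartment `Ā = ⊔_{F ∈ Σ} A_F`, `A_F = A/⟨F⟩`. -/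
def Abar : Type _ := Quot S.AbarRel

/-- `r_F(u)`, the image of `u ∈ A` in the stratum `A_F` of `Ā`. -/
def mkAbar (F : S.Faces) (u : A) : S.Abar := Quot.mk _ (F, u)

/-- The basic set `Γ_F(U) = ⋃_{F' ⊆ cl F} r_{F'}(U + F)` of `Ā`. -/
def Gamma (F : S.Faces) (U : Set A) : Set S.Abar :=
  {p | ∃ F' : S.Faces, F'.val ⊆ closure F.val ∧ ∃ u ∈ U + F.val, p = S.mkAbar F' u}

/-- The topology of `Ā`, generated by the sets `Γ_F(U)` for `F ∈ Σ` and `U ⊆ A`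
bounded and open. -/
instance : TopologicalSpace S.Abar :=
  TopologicalSpace.generateFrom
    {V : Set S.Abar | ∃ (F : S.Faces) (U : Set A),
      IsOpen U ∧ IsBounded U ∧ V = S.Gamma F U}

/-- `f_Ω(a) = inf {t : Ω ⊆ cl_Ā {z ∈ A : a(z) ≥ -t}} ∈ ℝ ∪ {±∞}`, where `A` is embedded
in `Ā` as the stratum of the face `F₀ = {0}`. -/
def fOmega (F₀ : S.Faces) (Ω : Set S.Abar) (a : Module.Dual ℝ A) : EReal :=
  sInf ((fun t : ℝ => (t : EReal)) ''
    {t : ℝ | Ω ⊆ closure (S.mkAbar F₀ '' {z : A | -t ≤ a z})})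

end RootWeightSystem


variable {A : Type*} [NormedAddCommGroup A] [NormedSpace ℝ A] [FiniteDimensional ℝ A]

/-- The closed Weyl chamber `C̃(Δ) = {x ∈ A : a(x) ≥ 0 for all a ∈ Δ}`. -/
def Ctilde {A : Type*} [NormedAddCommGroup A] [NormedSpace ℝ A]
    [FiniteDimensional ℝ A] (Δ : Finset (Module.Dual ℝ A)) : Set A :=
  {x : A | ∀ a ∈ Δ, 0 ≤ a x}

/-- The chamber face `E_Z = {x : a(x) = 0 ∀ a ∈ Z, a(x) > 0 ∀ a ∈ Δ \ Z}`. -/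
def chamberFace {A : Type*} [NormedAddCommGroup A] [NormedSpace ℝ A]
    [FiniteDimensional ℝ A] (Δ Z : Finset (Module.Dual ℝ A)) : Set A :=
  {x : A | (∀ a ∈ Z, a x = 0) ∧ ∀ a ∈ Δ, a ∉ Z → 0 < a x}

section StatementSeventeenAux

variable {A : Type*} [NormedAddCommGroup A] [NormedSpace ℝ A] [FiniteDimensional ℝ A]

lemma aux_sum_apply (Δ : Finset (Module.Dual ℝ A)) (n : Module.Dual ℝ A → ℝ) (x : A) :
    (∑ b ∈ Δ, n b • b) x = ∑ b ∈ Δ, n b * b x := by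
  simp [LinearMap.sum_apply, LinearMap.smul_apply, smul_eq_mul]

lemma aux_coeffs_unique (Δ : Finset (Module.Dual ℝ A))
    (hli : LinearIndependent ℝ (fun a : (↑Δ : Set (Module.Dual ℝ A)) => (a : Module.Dual ℝ A)))
    {μ : Module.Dual ℝ A} {n m : Module.Dual ℝ A → ℝ}
    (hn : μ = ∑ b ∈ Δ, n b • b) (hm : μ = ∑ b ∈ Δ, m b • b) :
    ∀ b ∈ Δ, n b = m b := by
  intro b hb
  have h0 : ∑ i : (↑Δ : Set (Module.Dual ℝ A)), (n i - m i) • (i : Module.Dual ℝ A) = 0 := by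
    rw [Finset.sum_set_coe (f := fun b => (n b - m b) • b), Finset.toFinset_coe]
    have h1 : ∑ b ∈ Δ, ((n b • b : Module.Dual ℝ A) - m b • b) = 0 := by
      rw [Finset.sum_sub_distrib, ← hn, ← hm, sub_self]
    rw [← h1]
    exact Finset.sum_congr rfl fun c _ => sub_smul (n c) (m c) c
  have := Fintype.linearIndependent_iff.mp hli (fun i => n i - m i) h0 ⟨b, hb⟩
  have h2 : n b - m b = 0 := this
  linarith

lemma aux_coeffs_eq (Δ : Finset (Module.Dual ℝ A))
    (hli : LinearIndependent ℝ (fun a : (↑Δ : Set (Module.Dual ℝ A)) => (a : Module.Dual ℝ A)))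
    {μ : Module.Dual ℝ A} {n : Module.Dual ℝ A → ℝ} (hn : μ = ∑ b ∈ Δ, n b • b) :
    ∀ b ∈ Δ, coeffs Δ μ b = n b := by
  have hex : ∃ n' : Module.Dual ℝ A → ℝ, μ = ∑ b ∈ Δ, n' b • b := ⟨n, hn⟩
  have hch : coeffs Δ μ = hex.choose := by simp only [coeffs, dif_pos hex]
  intro b hb
  rw [hch]
  exact aux_coeffs_unique Δ hli hex.choose_spec hn b hb

lemma aux_supp_eq (Δ : Finset (Module.Dual ℝ A))
    (hli : LinearIndependent ℝ (fun a : (↑Δ : Set (Module.Dual ℝ A)) => (a : Module.Dual ℝ A)))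
    {μ : Module.Dual ℝ A} {n : Module.Dual ℝ A → ℝ} (hn : μ = ∑ b ∈ Δ, n b • b) :
    supp Δ μ = Δ.filter fun b => n b ≠ 0 := by
  unfold supp
  ext c
  simp only [Finset.mem_filter, and_congr_right_iff]
  intro hc
  rw [aux_coeffs_eq Δ hli hn c hc]

lemma aux_supp_zero (Δ : Finset (Module.Dual ℝ A))
    (hli : LinearIndependent ℝ (fun a : (↑Δ : Set (Module.Dual ℝ A)) => (a : Module.Dual ℝ A))) :
    supp Δ (0 : Module.Dual ℝ A) = ∅ := by
  have h0 : (0 : Module.Dual ℝ A) = ∑ b ∈ Δ, (0:ℝ) • b := by simp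
  rw [aux_supp_eq Δ hli h0]
  simp

lemma aux_exists_point (Δ : Finset (Module.Dual ℝ A))
    (hli : LinearIndependent ℝ (fun a : (↑Δ : Set (Module.Dual ℝ A)) => (a : Module.Dual ℝ A)))
    (hsp : Submodule.span ℝ (↑Δ : Set (Module.Dual ℝ A)) = ⊤)
    (c : Module.Dual ℝ A → ℝ) : ∃ x : A, ∀ a ∈ Δ, a x = c a := by
  let B : Module.Basis (↑Δ : Set (Module.Dual ℝ A)) ℝ (Module.Dual ℝ A) :=
    Module.Basis.mk hli (by rw [Subtype.range_coe, hsp])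
  let φ : Module.Dual ℝ (Module.Dual ℝ A) := B.constr ℝ (fun i => c i)
  refine ⟨(Module.evalEquiv ℝ A).symm φ, fun a ha => ?_⟩
  have h1 : a ((Module.evalEquiv ℝ A).symm φ) = φ a :=
    Module.apply_evalEquiv_symm_apply ℝ A a φ
  rw [h1]
  have h2 : φ (B ⟨a, ha⟩) = c a := B.constr_basis ℝ _ _
  rwa [Module.Basis.mk_apply] at h2

end StatementSeventeenAux

section StatementSeventeenMain

set_option linter.unusedSectionVars false

variable {A : Type*} [NormedAddCommGroup A] [NormedSpace ℝ A] [FiniteDimensional ℝ A]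

/-- The edge relation of the graph on `M`. -/
def ERel (S : RootWeightSystem A) (M : Set (Module.Dual ℝ A)) :
    Module.Dual ℝ A → Module.Dual ℝ A → Prop :=
  fun x y => x ∈ M ∧ y ∈ M ∧ S.inn x y ≠ 0

lemma graphConnected_iff (S : RootWeightSystem A) (M : Set (Module.Dual ℝ A)) :
    GraphConnected S.inn M ↔ ∀ m ∈ M, ∀ n ∈ M, Relation.ReflTransGen (ERel S M) m n :=
  Iff.rfl

lemma aux_rtg_mono (S : RootWeightSystem A) {M N : Set (Module.Dual ℝ A)} (h : M ⊆ N)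
    {a b : Module.Dual ℝ A} (hab : Relation.ReflTransGen (ERel S M) a b) :
    Relation.ReflTransGen (ERel S N) a b :=
  Relation.ReflTransGen.mono (fun _ _ hxy => ⟨h hxy.1, h hxy.2.1, hxy.2.2⟩) _ _ hab

lemma aux_rtg_symm (S : RootWeightSystem A) {M : Set (Module.Dual ℝ A)}
    {a b : Module.Dual ℝ A} (hab : Relation.ReflTransGen (ERel S M) a b) :
    Relation.ReflTransGen (ERel S M) b a :=
  (@Relation.ReflTransGen.stdSymm _ _
    ⟨fun _ _ hxy => ⟨hxy.2.1, hxy.1, by rw [S.inn_symm]; exact hxy.2.2⟩⟩).symm _ _ hab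

lemma aux_span (S : RootWeightSystem A) {Δ : Finset (Module.Dual ℝ A)}
    (hΔ : S.toRootWeightData.IsBase Δ) :
    Submodule.span ℝ (↑Δ : Set (Module.Dual ℝ A)) = ⊤ := by
  rw [← top_le_iff, ← S.phi_spans, Submodule.span_le]
  intro a ha
  rcases hΔ.2.2 a ha with ⟨n, -, rfl⟩ | ⟨n, -, rfl⟩
  · exact Submodule.sum_mem _ fun b hb =>
      Submodule.smul_mem _ _ (Submodule.subset_span hb)
  · exact Submodule.neg_mem _ (Submodule.sum_mem _ fun b hb =>
      Submodule.smul_mem _ _ (Submodule.subset_span hb))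

lemma aux_supp_admissible (S : RootWeightSystem A) {Δ : Finset (Module.Dual ℝ A)}
    (hΔ : S.toRootWeightData.IsBase Δ) {l : Module.Dual ℝ A} (hl : l ∈ S.Λ) :
    S.toRootWeightData.Admissible Δ (supp Δ (S.lam0 Δ - l)) := by
  have hsub : supp Δ (S.lam0 Δ - l) ⊆ Δ := Finset.filter_subset _ _
  exact (S.admissible_iff_support Δ hΔ _ hsub).mpr ⟨l, hl, rfl⟩

lemma face_eval_zero (S : RootWeightSystem A) {Δ Y : Finset (Module.Dual ℝ A)}
    (hΔ : S.toRootWeightData.IsBase Δ) {y : A} (hy1 : ∀ a ∈ Y, a y = 0)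
    {l : Module.Dual ℝ A} (hl : l ∈ S.Λ) (hsupp : supp Δ (S.lam0 Δ - l) ⊆ Y) :
    (S.lam0 Δ - l) y = 0 := by
  obtain ⟨n, hn0, hn⟩ := S.lam0_dominates Δ hΔ l hl
  rw [hn, aux_sum_apply]
  refine Finset.sum_eq_zero fun c hc => ?_
  by_cases h : n c = 0
  · rw [h, zero_mul]
  · have hc' : c ∈ supp Δ (S.lam0 Δ - l) := by
      rw [aux_supp_eq Δ hΔ.2.1 hn]
      exact Finset.mem_filter.mpr ⟨hc, h⟩
    rw [hy1 c (hsupp hc'), mul_zero]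

/-- `l` takes the maximal value among all weights at `y`. -/
def IsMaxAt (S : RootWeightSystem A) (y : A) (l : Module.Dual ℝ A) : Prop :=
  ∀ m ∈ S.Λ, m y ≤ l y

/-- The set of points having the same maximal weights as `x`. -/
def Gset (S : RootWeightSystem A) (x : A) : Set A :=
  {y | ∀ l ∈ S.Λ, (IsMaxAt S x l ↔ IsMaxAt S y l)}

lemma face_le (S : RootWeightSystem A) {Δ Y : Finset (Module.Dual ℝ A)}
    (hΔ : S.toRootWeightData.IsBase Δ) {y : A} (hy : y ∈ S.Face Δ Y)
    {l : Module.Dual ℝ A} (hl : l ∈ S.Λ) :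
    l y ≤ S.lam0 Δ y ∧ (l y = S.lam0 Δ y ↔ supp Δ (S.lam0 Δ - l) ⊆ Y) := by
  by_cases hsupp : supp Δ (S.lam0 Δ - l) ⊆ Y
  · have h0 : (S.lam0 Δ - l) y = 0 := face_eval_zero S hΔ hy.1 hl hsupp
    rw [LinearMap.sub_apply] at h0
    constructor
    · linarith
    · simp only [hsupp, iff_true]; linarith
  · have hpos : 0 < (S.lam0 Δ - l) y := hy.2 l hl hsupp
    rw [LinearMap.sub_apply] at hpos
    constructor
    · linarith
    · simp only [hsupp, iff_false]; intro h; linarith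

lemma face_max_iff (S : RootWeightSystem A) {Δ Y : Finset (Module.Dual ℝ A)}
    (hΔ : S.toRootWeightData.IsBase Δ) {y : A} (hy : y ∈ S.Face Δ Y)
    {l : Module.Dual ℝ A} (hl : l ∈ S.Λ) :
    IsMaxAt S y l ↔ supp Δ (S.lam0 Δ - l) ⊆ Y := by
  have hlam0 : S.lam0 Δ ∈ S.Λ := S.lam0_mem Δ hΔ
  constructor
  · intro hmax
    have h1 : l y ≤ S.lam0 Δ y := (face_le S hΔ hy hl).1
    have h2 : S.lam0 Δ y ≤ l y := hmax _ hlam0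
    exact (face_le S hΔ hy hl).2.mp (le_antisymm h1 h2)
  · intro hsupp m hm
    have h1 : m y ≤ S.lam0 Δ y := (face_le S hΔ hy hm).1
    have h2 : l y = S.lam0 Δ y := (face_le S hΔ hy hl).2.mpr hsupp
    linarith

end StatementSeventeenMain

section StatementSeventeenMain2

set_option linter.unusedSectionVars false

variable {A : Type*} [NormedAddCommGroup A] [NormedSpace ℝ A] [FiniteDimensional ℝ A]

lemma zero_step (S : RootWeightSystem A) {Δ Y : Finset (Module.Dual ℝ A)}
    (hΔ : S.toRootWeightData.IsBase Δ) (hY : Y ⊆ Δ) {y : A}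
    (hzero : ∀ l ∈ S.Λ, supp Δ (S.lam0 Δ - l) ⊆ Y → (S.lam0 Δ - l) y = 0)
    {Y₂ : Finset (Module.Dual ℝ A)} (hY₂ : Y₂ ⊆ Y)
    (hadm : S.toRootWeightData.Admissible Δ Y₂)
    {a : Module.Dual ℝ A} (ha : a ∈ Y₂)
    (hprev : ∀ b ∈ Y₂, b ≠ a → b y = 0) : a y = 0 := by
  obtain ⟨l, hl, hsupp⟩ := (S.admissible_iff_support Δ hΔ Y₂ (hY₂.trans hY)).mp hadm
  obtain ⟨n, hn0, hn⟩ := S.lam0_dominates Δ hΔ l hl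
  have hfil : Y₂ = Δ.filter fun b => n b ≠ 0 := by
    rw [← hsupp, aux_supp_eq Δ hΔ.2.1 hn]
  have h0 : (S.lam0 Δ - l) y = 0 := by
    refine hzero l hl ?_
    rw [hsupp]; exact hY₂
  rw [hn, aux_sum_apply] at h0
  have haΔ : a ∈ Δ := (hY₂.trans hY) ha
  have hsingle : ∑ c ∈ Δ, n c * c y = n a * a y := by
    refine Finset.sum_eq_single a (fun c hc hca => ?_) (fun h => absurd haΔ h)
    by_cases hnc : n c = 0
    · rw [hnc, zero_mul]
    · have hcY₂ : c ∈ Y₂ := by rw [hfil]; exact Finset.mem_filter.mpr ⟨hc, hnc⟩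
      rw [hprev c hcY₂ hca, mul_zero]
  rw [hsingle] at h0
  have hna : n a ≠ 0 := by
    have : a ∈ Δ.filter fun b => n b ≠ 0 := hfil ▸ ha
    exact (Finset.mem_filter.mp this).2
  exact (mul_eq_zero.mp h0).resolve_left hna

lemma vanish_on_Y (S : RootWeightSystem A) {Δ Y : Finset (Module.Dual ℝ A)}
    (hΔ : S.toRootWeightData.IsBase Δ)
    (hadmY : S.toRootWeightData.Admissible Δ Y) {y : A}
    (hzero : ∀ l ∈ S.Λ, supp Δ (S.lam0 Δ - l) ⊆ Y → (S.lam0 Δ - l) y = 0) :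
    ∀ a ∈ Y, a y = 0 := by
  obtain ⟨hYΔ, hconn⟩ := hadmY
  have singl_conn : ∀ (Y₁ : Finset (Module.Dual ℝ A)),
      (↑Y₁ : Set (Module.Dual ℝ A)) ⊆ {S.lam0 Δ} →
      GraphConnected S.inn ((↑Y₁ : Set (Module.Dual ℝ A)) ∪ {S.lam0 Δ}) := by
    intro Y₁ hsub m hm n hn
    have hm' : m = S.lam0 Δ := by
      rcases hm with h | h
      · exact hsub h
      · exact h
    have hn' : n = S.lam0 Δ := by
      rcases hn with h | h
      · exact hsub h
      · exact h
    rw [hm', hn']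
  -- lam0 y = 0 whenever lam0 ∈ Y, needed for the base case
  have hlam_zero : S.lam0 Δ ∈ Y → (S.lam0 Δ) y = 0 := by
    intro hlY
    refine zero_step S hΔ hYΔ hzero (Y₂ := {S.lam0 Δ})
      (Finset.singleton_subset_iff.mpr hlY)
      ⟨Finset.singleton_subset_iff.mpr (hYΔ hlY), singl_conn _ (by simp)⟩
      (Finset.mem_singleton_self _) (fun b hb hba => absurd (Finset.mem_singleton.mp hb) hba)
  have main : ∀ a, Relation.ReflTransGen
      (ERel S ((↑Y : Set (Module.Dual ℝ A)) ∪ {S.lam0 Δ})) (S.lam0 Δ) a →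
      ∃ Y₁ : Finset (Module.Dual ℝ A), Y₁ ⊆ Y ∧
        GraphConnected S.inn ((↑Y₁ : Set (Module.Dual ℝ A)) ∪ {S.lam0 Δ}) ∧
        (a ∈ Y → a ∈ Y₁) ∧ ∀ b ∈ Y₁, b y = 0 := by
    intro a h
    induction h with
    | refl =>
      by_cases hlY : S.lam0 Δ ∈ Y
      · refine ⟨{S.lam0 Δ}, Finset.singleton_subset_iff.mpr hlY, singl_conn _ (by simp),
          fun _ => Finset.mem_singleton_self _, fun b hb => ?_⟩
        rw [Finset.mem_singleton.mp hb]
        exact hlam_zero hlY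
      · exact ⟨∅, Finset.empty_subset _, singl_conn _ (by simp),
          fun h => absurd h hlY, by simp⟩
    | @tail b c hb hedge ih =>
      obtain ⟨Y₁, hY₁Y, hconn₁, hbmem, hvan₁⟩ := ih
      by_cases hcY : c ∈ Y
      swap
      · exact ⟨Y₁, hY₁Y, hconn₁, fun h => absurd h hcY, hvan₁⟩
      by_cases hcY₁ : c ∈ Y₁
      · exact ⟨Y₁, hY₁Y, hconn₁, fun _ => hcY₁, hvan₁⟩
      set Y₂ := insert c Y₁ with hY₂def
      have hY₂Y : Y₂ ⊆ Y := Finset.insert_subset hcY hY₁Y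
      have hbM₁ : b ∈ (↑Y₁ : Set (Module.Dual ℝ A)) ∪ {S.lam0 Δ} := by
        rcases hedge.1 with hbY | hblam
        · exact Or.inl (Finset.mem_coe.mpr (hbmem (Finset.mem_coe.mp hbY)))
        · exact Or.inr hblam
      have hM₁M₂ : (↑Y₁ : Set (Module.Dual ℝ A)) ∪ {S.lam0 Δ} ⊆
          (↑Y₂ : Set (Module.Dual ℝ A)) ∪ {S.lam0 Δ} := by
        apply Set.union_subset_union_left
        intro z hz
        exact Finset.mem_coe.mpr (Finset.mem_insert_of_mem (Finset.mem_coe.mp hz))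
      have hcM₂ : c ∈ (↑Y₂ : Set (Module.Dual ℝ A)) ∪ {S.lam0 Δ} :=
        Or.inl (Finset.mem_coe.mpr (Finset.mem_insert_self _ _))
      have hbM₂ := hM₁M₂ hbM₁
      have hpath_c : Relation.ReflTransGen
          (ERel S ((↑Y₂ : Set (Module.Dual ℝ A)) ∪ {S.lam0 Δ})) c (S.lam0 Δ) := by
        refine Relation.ReflTransGen.head ⟨hcM₂, hbM₂, ?_⟩
          (aux_rtg_mono S hM₁M₂ (hconn₁ b hbM₁ (S.lam0 Δ) (Or.inr rfl)))
        rw [S.inn_symm]; exact hedge.2.2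
      have hto_lam : ∀ m ∈ (↑Y₂ : Set (Module.Dual ℝ A)) ∪ {S.lam0 Δ},
          Relation.ReflTransGen
            (ERel S ((↑Y₂ : Set (Module.Dual ℝ A)) ∪ {S.lam0 Δ})) m (S.lam0 Δ) := by
        intro m hm
        rcases hm with hmY₂ | hmlam
        · rcases Finset.mem_insert.mp (Finset.mem_coe.mp hmY₂) with rfl | hmY₁
          · exact hpath_c
          · exact aux_rtg_mono S hM₁M₂
              (hconn₁ m (Or.inl (Finset.mem_coe.mpr hmY₁)) (S.lam0 Δ) (Or.inr rfl))
        · rw [hmlam]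
      have hconn₂ : GraphConnected S.inn ((↑Y₂ : Set (Module.Dual ℝ A)) ∪ {S.lam0 Δ}) :=
        fun m hm n hn => (hto_lam m hm).trans (aux_rtg_symm S (hto_lam n hn))
      have hadm₂ : S.toRootWeightData.Admissible Δ Y₂ := ⟨hY₂Y.trans hYΔ, hconn₂⟩
      have hcy : c y = 0 := by
        refine zero_step S hΔ hYΔ hzero hY₂Y hadm₂ (Finset.mem_insert_self _ _) ?_
        intro b' hb' hb'c
        exact hvan₁ b' ((Finset.mem_insert.mp hb').resolve_left hb'c)
      refine ⟨Y₂, hY₂Y, hconn₂, fun _ => Finset.mem_insert_self _ _, fun b' hb' => ?_⟩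
      rcases Finset.mem_insert.mp hb' with rfl | hb'Y₁
      · exact hcy
      · exact hvan₁ b' hb'Y₁
  intro a ha
  obtain ⟨Y₁, -, -, hmem, hvan⟩ := main a
    (hconn (S.lam0 Δ) (Or.inr rfl) a (Or.inl (Finset.mem_coe.mpr ha)))
  exact hvan a (hmem ha)

lemma face_eq_gset (S : RootWeightSystem A) {Δ Y : Finset (Module.Dual ℝ A)}
    (hΔ : S.toRootWeightData.IsBase Δ)
    (hadmY : S.toRootWeightData.Admissible Δ Y) {x : A} (hx : x ∈ S.Face Δ Y) :
    S.Face Δ Y = Gset S x := by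
  ext y
  constructor
  · intro hy l hl
    rw [face_max_iff S hΔ hx hl, face_max_iff S hΔ hy hl]
  · intro hy
    have hlam0mem : S.lam0 Δ ∈ S.Λ := S.lam0_mem Δ hΔ
    have hsupp0 : supp Δ (S.lam0 Δ - S.lam0 Δ) ⊆ Y := by
      rw [sub_self, aux_supp_zero Δ hΔ.2.1]
      exact Finset.empty_subset _
    have hmax0x : IsMaxAt S x (S.lam0 Δ) := (face_max_iff S hΔ hx hlam0mem).mpr hsupp0
    have hmax0y : IsMaxAt S y (S.lam0 Δ) := (hy _ hlam0mem).mp hmax0x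
    have hzero : ∀ l ∈ S.Λ, supp Δ (S.lam0 Δ - l) ⊆ Y → (S.lam0 Δ - l) y = 0 := by
      intro l hl hs
      have hmaxl : IsMaxAt S y l := (hy l hl).mp ((face_max_iff S hΔ hx hl).mpr hs)
      have h1 : l y ≤ S.lam0 Δ y := hmax0y l hl
      have h2 : S.lam0 Δ y ≤ l y := hmaxl _ hlam0mem
      rw [LinearMap.sub_apply]; linarith
    refine ⟨vanish_on_Y S hΔ hadmY hzero, fun l hl hs => ?_⟩
    have hnx : ¬ IsMaxAt S x l := fun h => hs ((face_max_iff S hΔ hx hl).mp h)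
    have hny : ¬ IsMaxAt S y l := fun h => hnx ((hy l hl).mpr h)
    simp only [IsMaxAt, not_forall] at hny
    obtain ⟨m, hm, hlt⟩ := hny
    have h1 : m y ≤ S.lam0 Δ y := hmax0y m hm
    rw [LinearMap.sub_apply]
    push_neg at hlt
    linarith

end StatementSeventeenMain2

section StatementSeventeenMain3

set_option linter.unusedSectionVars false

variable {A : Type*} [NormedAddCommGroup A] [NormedSpace ℝ A] [FiniteDimensional ℝ A]

lemma exists_face_of_chamber (S : RootWeightSystem A) {Δ' : Finset (Module.Dual ℝ A)}
    (hΔ' : S.toRootWeightData.IsBase Δ') {x : A} (hx : x ∈ Ctilde Δ') :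
    ∃ Y' : Finset (Module.Dual ℝ A),
      S.toRootWeightData.Admissible Δ' Y' ∧ x ∈ S.Face Δ' Y' := by
  set Z : Finset (Module.Dual ℝ A) := Δ'.filter (fun a => a x = 0) with hZdef
  set M : Set (Module.Dual ℝ A) := (↑Z : Set (Module.Dual ℝ A)) ∪ {S.lam0 Δ'} with hMdef
  set Y' : Finset (Module.Dual ℝ A) :=
    Z.filter (fun a => Relation.ReflTransGen (ERel S M) (S.lam0 Δ') a) with hY'def
  set MY : Set (Module.Dual ℝ A) := (↑Y' : Set (Module.Dual ℝ A)) ∪ {S.lam0 Δ'} with hMYdef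
  have hY'Z : Y' ⊆ Z := Finset.filter_subset _ _
  have hZΔ : Z ⊆ Δ' := Finset.filter_subset _ _
  -- paths from lam0 in M stay inside MY
  have prune : ∀ a, Relation.ReflTransGen (ERel S M) (S.lam0 Δ') a →
      Relation.ReflTransGen (ERel S MY) (S.lam0 Δ') a := by
    intro a h
    induction h with
    | refl => exact Relation.ReflTransGen.refl
    | @tail b c hb hedge ih =>
      have hcMY : c ∈ MY := by
        rcases hedge.2.1 with hcZ | hclam
        · exact Or.inl (Finset.mem_coe.mpr (Finset.mem_filter.mpr
            ⟨Finset.mem_coe.mp hcZ, hb.tail hedge⟩))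
        · exact Or.inr hclam
      have hbMY : b ∈ MY := by
        rcases hedge.1 with hbZ | hblam
        · exact Or.inl (Finset.mem_coe.mpr (Finset.mem_filter.mpr
            ⟨Finset.mem_coe.mp hbZ, hb⟩))
        · exact Or.inr hblam
      exact ih.tail ⟨hbMY, hcMY, hedge.2.2⟩
  have hto_lam : ∀ m ∈ MY, Relation.ReflTransGen (ERel S MY) (S.lam0 Δ') m := by
    intro m hm
    rcases hm with hmY' | hmlam
    · exact prune m (Finset.mem_filter.mp (Finset.mem_coe.mp hmY')).2
    · rw [hmlam]
  have hconn : GraphConnected S.inn MY :=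
    fun m hm n hn => (aux_rtg_symm S (hto_lam m hm)).trans (hto_lam n hn)
  have hadm : S.toRootWeightData.Admissible Δ' Y' := ⟨hY'Z.trans hZΔ, hconn⟩
  refine ⟨Y', hadm, ⟨fun a ha => (Finset.mem_filter.mp (hY'Z ha)).2, ?_⟩⟩
  intro l hl hns
  obtain ⟨n, hn0, hn⟩ := S.lam0_dominates Δ' hΔ' l hl
  have hterm : ∀ c ∈ Δ', 0 ≤ n c * c x := fun c hc => mul_nonneg (hn0 c hc) (hx c hc)
  have hsupΔ : supp Δ' (S.lam0 Δ' - l) ⊆ Δ' := Finset.filter_subset _ _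
  have hsuppadm := aux_supp_admissible S hΔ' hl
  have key : ∃ c ∈ Δ', 0 < n c * c x := by
    by_cases hZc : supp Δ' (S.lam0 Δ' - l) ⊆ Z
    · exfalso
      apply hns
      intro c hc
      have hcZ : c ∈ Z := hZc hc
      have hsubM : (↑(supp Δ' (S.lam0 Δ' - l)) : Set (Module.Dual ℝ A)) ∪ {S.lam0 Δ'} ⊆ M := by
        apply Set.union_subset_union_left
        intro z hz
        exact Finset.mem_coe.mpr (hZc (Finset.mem_coe.mp hz))
      have hpc := hsuppadm.2 (S.lam0 Δ') (Or.inr rfl) c (Or.inl (Finset.mem_coe.mpr hc))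
      exact Finset.mem_filter.mpr ⟨hcZ, aux_rtg_mono S hsubM hpc⟩
    · obtain ⟨c, hcsup, hcZ⟩ := Finset.not_subset.mp hZc
      have hcΔ : c ∈ Δ' := hsupΔ hcsup
      have hcx0 : c x ≠ 0 := fun h => hcZ (Finset.mem_filter.mpr ⟨hcΔ, h⟩)
      have hcx : 0 < c x := lt_of_le_of_ne (hx c hcΔ) (Ne.symm hcx0)
      have hnc : n c ≠ 0 := by
        rw [aux_supp_eq Δ' hΔ'.2.1 hn] at hcsup
        exact (Finset.mem_filter.mp hcsup).2
      exact ⟨c, hcΔ, mul_pos (lt_of_le_of_ne (hn0 c hcΔ) (Ne.symm hnc)) hcx⟩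
  obtain ⟨c, hcΔ, hcpos⟩ := key
  rw [hn, aux_sum_apply]
  exact lt_of_lt_of_le hcpos (Finset.single_le_sum hterm hcΔ)

lemma face_point (S : RootWeightSystem A) {Δ Y : Finset (Module.Dual ℝ A)}
    (hΔ : S.toRootWeightData.IsBase Δ) (hYΔ : Y ⊆ Δ) :
    ∃ x : A, x ∈ S.Face Δ Y ∧ x ∈ Ctilde Δ := by
  obtain ⟨x, hxval⟩ := aux_exists_point Δ hΔ.2.1 (aux_span S hΔ)
    (fun a => if a ∈ Y then 0 else 1)
  have hC : x ∈ Ctilde Δ := by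
    intro a ha
    rw [hxval a ha]
    split <;> norm_num
  refine ⟨x, ⟨fun a ha => by rw [hxval a (hYΔ ha)]; simp [ha], ?_⟩, hC⟩
  intro l hl hns
  obtain ⟨n, hn0, hn⟩ := S.lam0_dominates Δ hΔ l hl
  obtain ⟨c, hcsup, hcY⟩ := Finset.not_subset.mp hns
  have hcΔ : c ∈ Δ := (Finset.filter_subset _ _) hcsup
  have hnc : n c ≠ 0 := by
    rw [aux_supp_eq Δ hΔ.2.1 hn] at hcsup
    exact (Finset.mem_filter.mp hcsup).2
  have hterm : ∀ b ∈ Δ, 0 ≤ n b * b x := fun b hb => mul_nonneg (hn0 b hb) (hC b hb)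
  have hcterm : 0 < n c * c x := by
    rw [hxval c hcΔ, if_neg hcY, mul_one]
    exact lt_of_le_of_ne (hn0 c hcΔ) (Ne.symm hnc)
  rw [hn, aux_sum_apply]
  exact lt_of_lt_of_le hcterm (Finset.single_le_sum hterm hcΔ)

end StatementSeventeenMain3

/-- `F_Y^Δ` meets the closed chamber `C̃(Δ')` iff there exists an
admissible subset `Y' ⊆ Δ'` with `F_Y^Δ = F_{Y'}^{Δ'}`. -/
theorem face_meets_chamber_iff (S : RootWeightSystem A)
    (Δ Δ' Y : Finset (Module.Dual ℝ A))
    (hΔ : S.toRootWeightData.IsBase Δ) (hΔ' : S.toRootWeightData.IsBase Δ')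
    (hY : S.toRootWeightData.Admissible Δ Y) :
    (S.Face Δ Y ∩ Ctilde Δ').Nonempty ↔
      ∃ Y' : Finset (Module.Dual ℝ A),
        S.toRootWeightData.Admissible Δ' Y' ∧ S.Face Δ Y = S.Face Δ' Y' := by
  constructor
  · rintro ⟨x, hxF, hxC⟩
    obtain ⟨Y', hadm', hxF'⟩ := exists_face_of_chamber S hΔ' hxC
    refine ⟨Y', hadm', ?_⟩
    rw [face_eq_gset S hΔ hY hxF, face_eq_gset S hΔ' hadm' hxF']
  · rintro ⟨Y', hadm', heq⟩
    obtain ⟨x, hxF, hxC⟩ := face_point S hΔ' hadm'.1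
    refine ⟨x, ?_, hxC⟩
    rw [heq]
    exact hxF
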